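/- If R ⊆ [K] is self-consistent at level α, i.e., every i ∈ R satisfies E_i ≥ K/(α|R|), then for every nonempty A ⊆ [K], the arithmetic mean e-value E_A = (∑_{i∈A} E_i)/|A| satisfies E_A ≥ FDP_A(R)/α, where FDP_A(R) = |A∩R|/max(|R|,1). In other words, every self-consistent rejection set lies in the closed candidate set C̄. -/

import Mathlib

open Finset

/-- The false discovery proportion `FDP_A(R) = |A ∩ R| / max(|R|, 1)`. -/
noncomputable def FDP {K : ℕ} (A R : Finset (Fin K)) : ℝ :=
  ((A ∩ R).card : ℝ) / max (R.card : ℝ) 1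

/-- every self-consistent rejection set lies in the closed candidate set:
if every `i ∈ R` has `E_i ≥ K/(α|R|)`, then for every nonempty `A`,
the arithmetic mean `E_A` satisfies `E_A ≥ FDP_A(R)/α`. -/
theorem stmt1 (K : ℕ) (hK : 0 < K) (α : ℝ) (hα : 0 < α) (hα1 : α ≤ 1)
    (E : Fin K → ℝ) (hE : ∀ i, 0 ≤ E i) (R : Finset (Fin K))
    (hSC : ∀ i ∈ R, E i ≥ (K : ℝ) / (α * R.card)) :
    ∀ A : Finset (Fin K), A.Nonempty →
      (∑ i ∈ A, E i) / (A.card : ℝ) ≥ FDP A R / α := by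
  intro A hA
  have hAcard : (0 : ℝ) < A.card := by exact_mod_cast hA.card_pos
  rcases Finset.eq_empty_or_nonempty R with hR | hR
  · subst hR
    simp only [FDP, Finset.inter_empty, Finset.card_empty, Nat.cast_zero, zero_div]
    have : 0 ≤ ∑ i ∈ A, E i := Finset.sum_nonneg fun i _ => hE i
    positivity
  · have hRcard : (0 : ℝ) < R.card := by exact_mod_cast hR.card_pos
    have hRmax : max (R.card : ℝ) 1 = R.card := by
      apply max_eq_left; exact_mod_cast hR.card_pos
    set m : ℝ := ((A ∩ R).card : ℝ) with hm
    have hm0 : 0 ≤ m := by positivity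
    -- sum bound
    have h1 : ∑ i ∈ A, E i ≥ ∑ i ∈ A ∩ R, E i :=
      Finset.sum_le_sum_of_subset_of_nonneg (Finset.inter_subset_left)
        (fun i _ _ => hE i)
    have h2 : ∑ i ∈ A ∩ R, E i ≥ m * ((K : ℝ) / (α * R.card)) := by
      rw [hm]
      calc ((A ∩ R).card : ℝ) * ((K : ℝ) / (α * R.card))
          = ∑ _i ∈ A ∩ R, ((K : ℝ) / (α * R.card)) := by
            rw [Finset.sum_const, nsmul_eq_mul]
        _ ≤ ∑ i ∈ A ∩ R, E i :=
            Finset.sum_le_sum fun i hi => hSC i (Finset.mem_inter.mp hi).2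
    have hAK : (A.card : ℝ) ≤ K := by
      exact_mod_cast (Finset.card_le_card (Finset.subset_univ A)).trans_eq
        (Finset.card_univ.trans (Fintype.card_fin K))
    have key : ∑ i ∈ A, E i ≥ m * ((K : ℝ) / (α * R.card)) := le_trans h2 h1
    rw [FDP, hRmax, ge_iff_le, div_div, div_le_div_iff₀ (by positivity) hAcard]
    calc m * A.card ≤ m * K := by
          exact mul_le_mul_of_nonneg_left hAK hm0
      _ = m * ((K : ℝ) / (α * R.card)) * (R.card * α) := by
          field_simp
      _ ≤ (∑ i ∈ A, E i) * (R.card * α) :=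
          mul_le_mul_of_nonneg_right key (by positivity)
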